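/- Let E be a real locally convex topological vector space with dual E*, and T : E ⇉ E*. Then T is monotone if and only if for every x* ∈ E* and every nonempty compact convex subset K ⊆ E, there exists x̄ ∈ K such that ⟨y* − x*, y − x̄⟩ ≥ 0 for all (y,y*) in the graph of T with y ∈ K (i.e., the Minty variational inequality MVI(T, x*) has a solution on every nonempty compact convex K). -/

import Mathlib

/-- Every continuous linear functional on `Fin n → ℝ` is given by coefficients. -/
lemma clm_eq_sum_coeff {n : ℕ} (f : (Fin n → ℝ) →L[ℝ] ℝ) (x : Fin n → ℝ) :
    f x = ∑ i, x i * f (Pi.single i 1) := by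
  have hx : x = ∑ i, x i • (Pi.single i 1 : Fin n → ℝ) := by
    funext j
    simp [Finset.sum_apply, Pi.single_apply, mul_ite, Finset.sum_ite_eq]
  conv_lhs => rw [hx]
  rw [map_sum]
  simp [smul_eq_mul]

/-- Symmetric game lemma: if `A i j + A j i ≥ 0` for all `i j`, then there is a point of
the standard simplex `l` with `A l ≥ 0` componentwise. -/
lemma exists_simplex_nonneg {n : ℕ} [NeZero n] (A : Fin n → Fin n → ℝ)
    (hA : ∀ i j, 0 ≤ A i j + A j i) :
    ∃ l ∈ stdSimplex ℝ (Fin n), ∀ i, 0 ≤ ∑ j, A i j * l j := by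
  by_contra hcon
  push_neg at hcon
  -- the linear map given by A
  set L : (Fin n → ℝ) →ₗ[ℝ] (Fin n → ℝ) :=
    { toFun := fun l i => ∑ j, A i j * l j
      map_add' := by
        intro a b; funext i; simp [mul_add, Finset.sum_add_distrib]
      map_smul' := by
        intro c a; funext i; simp [Finset.mul_sum]; congr 1; funext j; ring } with hL
  have hLcont : Continuous L := LinearMap.continuous_of_finiteDimensional L
  set C : Set (Fin n → ℝ) := L '' stdSimplex ℝ (Fin n) with hC
  set D : Set (Fin n → ℝ) := {v | ∀ i, 0 ≤ v i} with hD
  have hCcx : Convex ℝ C := (convex_stdSimplex ℝ (Fin n)).linear_image L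
  have hCcp : IsCompact C := (isCompact_stdSimplex ℝ (Fin n)).image hLcont
  have hDcx : Convex ℝ D := by
    intro a ha b hb p q hp hq hpq i
    exact add_nonneg (smul_nonneg hp (ha i)) (smul_nonneg hq (hb i))
  have hDcl : IsClosed D := by
    have : D = ⋂ i, (fun v : Fin n → ℝ => v i) ⁻¹' Set.Ici 0 := by
      ext v; simp [hD]
    rw [this]
    exact isClosed_iInter fun i => isClosed_Ici.preimage (continuous_apply i)
  have hdisj : Disjoint C D := by
    rw [Set.disjoint_left]
    rintro v ⟨l, hl, rfl⟩ hv
    obtain ⟨i, hi⟩ := hcon l hl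
    exact absurd (hv i) (not_le.2 hi)
  obtain ⟨f, u, v, hfu, huv, hfv⟩ :=
    geometric_hahn_banach_compact_closed hCcx hCcp hDcx hDcl hdisj
  set p : Fin n → ℝ := fun i => f (Pi.single i 1) with hp
  have hv0 : v < 0 := by
    have h0 : (0 : Fin n → ℝ) ∈ D := fun i => le_refl 0
    have := hfv 0 h0
    simpa using this
  have hpnn : ∀ i, 0 ≤ p i := by
    intro i
    by_contra hneg
    push_neg at hneg
    set t : ℝ := (v - 1) / p i with ht
    have htpos : 0 ≤ t := le_of_lt (div_pos_of_neg_of_neg (by linarith) hneg)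
    set e : Fin n → ℝ := Pi.single i 1 with he
    have hmem : t • e ∈ D := by
      intro j
      by_cases hj : j = i
      · subst hj; simp [he, Pi.single_apply, htpos]
      · simp [he, Pi.single_apply, hj]
    have := hfv _ hmem
    rw [map_smul, smul_eq_mul] at this
    have : v < t * p i := this
    rw [ht, div_mul_cancel₀ _ (ne_of_lt hneg)] at this
    linarith
  have hfval : ∀ x, f x = ∑ i, x i * p i := fun x => clm_eq_sum_coeff f x
  set r : ℝ := ∑ i, p i with hr
  have hrnn : 0 ≤ r := Finset.sum_nonneg fun i _ => hpnn i
  have hrpos : 0 < r := by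
    rcases lt_or_eq_of_le hrnn with h | h
    · exact h
    · exfalso
      have hall : ∀ i, p i = 0 := by
        intro i
        have := (Finset.sum_eq_zero_iff_of_nonneg (fun j _ => hpnn j)).1 h.symm
        exact this i (Finset.mem_univ i)
      obtain ⟨i0⟩ : Nonempty (Fin n) := ⟨⟨0, Nat.pos_of_ne_zero (NeZero.ne n)⟩⟩
      have hmem : Pi.single i0 (1 : ℝ) ∈ stdSimplex ℝ (Fin n) := single_mem_stdSimplex ℝ i0
      have h1 := hfu _ ⟨_, hmem, rfl⟩
      rw [hfval] at h1
      simp [hall] at h1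
      linarith
  -- the strategy p / r belongs to the simplex
  set l : Fin n → ℝ := fun i => p i / r with hl
  have hlmem : l ∈ stdSimplex ℝ (Fin n) := by
    constructor
    · intro i; exact div_nonneg (hpnn i) hrnn
    · rw [← Finset.sum_div]; exact div_self (ne_of_gt hrpos)
  have hkey := hfu _ ⟨l, hlmem, rfl⟩
  rw [hfval] at hkey
  -- compute: f (L l) = (∑ i, ∑ j, A i j * p i * p j) / r ≥ 0
  have hquad : 0 ≤ ∑ i, ∑ j, A i j * (p i * p j) := by
    have hswap : ∑ i, ∑ j, A i j * (p i * p j) = ∑ i, ∑ j, A j i * (p i * p j) := by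
      rw [Finset.sum_comm]
      congr 1; funext i; congr 1; funext j; ring
    have hdouble : (∑ i, ∑ j, A i j * (p i * p j)) + (∑ i, ∑ j, A i j * (p i * p j))
        = ∑ i, ∑ j, (A i j + A j i) * (p i * p j) := by
      nth_rewrite 1 [hswap]
      rw [← Finset.sum_add_distrib]
      congr 1; funext i
      rw [← Finset.sum_add_distrib]
      congr 1; funext j; ring
    have hnn : 0 ≤ ∑ i, ∑ j, (A i j + A j i) * (p i * p j) :=
      Finset.sum_nonneg fun i _ => Finset.sum_nonneg fun j _ =>
        mul_nonneg (hA i j) (mul_nonneg (hpnn i) (hpnn j))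
    linarith
  have hcomp : ∑ i, (L l) i * p i = (∑ i, ∑ j, A i j * (p i * p j)) / r := by
    rw [Finset.sum_div]
    congr 1; funext i
    show (∑ j, A i j * (p j / r)) * p i = (∑ j, A i j * (p i * p j)) / r
    rw [Finset.sum_mul, Finset.sum_div]
    congr 1; funext j
    field_simp
  rw [hcomp] at hkey
  have : 0 ≤ (∑ i, ∑ j, A i j * (p i * p j)) / r := div_nonneg hquad hrnn
  linarith

lemma isCompact_segment_aux {E : Type*} [AddCommGroup E] [Module ℝ E]
    [TopologicalSpace E] [IsTopologicalAddGroup E] [ContinuousSMul ℝ E] (x y : E) :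
    IsCompact (segment ℝ x y) := by
  rw [segment_eq_image]
  exact isCompact_Icc.image <| by
    apply Continuous.add
    · exact (continuous_const.sub continuous_id).smul continuous_const
    · exact continuous_id.smul continuous_const

/-- `T` is monotone iff for every `x* ∈ E*` and every nonempty compact convex
`K ⊆ E`, the Minty variational inequality `MVI(T, x*)` has a solution on `K`. -/
theorem monotone_iff_minty_solvable {E : Type*} [AddCommGroup E] [Module ℝ E]
    [TopologicalSpace E] [IsTopologicalAddGroup E] [ContinuousSMul ℝ E]
    [LocallyConvexSpace ℝ E] [T2Space E]
    (T : E → Set (E →L[ℝ] ℝ)) :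
    (∀ x y (x' y' : E →L[ℝ] ℝ), x' ∈ T x → y' ∈ T y → 0 ≤ (y' - x') (y - x)) ↔
    (∀ z : E →L[ℝ] ℝ, ∀ K : Set E, K.Nonempty → IsCompact K → Convex ℝ K →
      ∃ xb ∈ K, ∀ y ∈ K, ∀ y' ∈ T y, 0 ≤ (y' - z) (y - xb)) := by
  constructor
  · -- monotone ⇒ Minty solvable
    intro hmono z K hne hcomp hconv
    -- index type: graph points over K
    set ι := {p : E × (E →L[ℝ] ℝ) // p.1 ∈ K ∧ p.2 ∈ T p.1} with hι
    set F : ι → Set E := fun p => {x | 0 ≤ (p.1.2 - z) (p.1.1 - x)} with hF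
    have hFcl : ∀ p : ι, IsClosed (F p) := by
      intro p
      have hcont : Continuous fun x : E => (p.1.2 - z) (p.1.1 - x) :=
        (p.1.2 - z).continuous.comp (continuous_const.sub continuous_id)
      exact isClosed_le continuous_const hcont
    have hFIP : ∀ u : Finset ι, (K ∩ ⋂ p ∈ u, F p).Nonempty := by
      intro u
      rcases u.eq_empty_or_nonempty with rfl | hune
      · simpa using hne
      · set n := u.card with hn
        haveI : NeZero n := ⟨by simp [hn, Finset.card_eq_zero]; exact Finset.nonempty_iff_ne_empty.1 hune⟩
        set e : Fin n ≃ {a // a ∈ u} := u.equivFin.symm with he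
        set Y : Fin n → E := fun i => ((e i : ι) : E × (E →L[ℝ] ℝ)).1 with hY
        set G : Fin n → (E →L[ℝ] ℝ) := fun i => ((e i : ι) : E × (E →L[ℝ] ℝ)).2 with hG
        have hYK : ∀ i, Y i ∈ K := fun i => ((e i : ι)).2.1
        have hGT : ∀ i, G i ∈ T (Y i) := fun i => ((e i : ι)).2.2
        set A : Fin n → Fin n → ℝ := fun i j => (G i - z) (Y i - Y j) with hA
        have hAsym : ∀ i j, 0 ≤ A i j + A j i := by
          intro i j
          have hm := hmono (Y j) (Y i) (G j) (G i) (hGT j) (hGT i)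
          have : A i j + A j i = (G i - G j) (Y i - Y j) := by
            simp only [hA, ContinuousLinearMap.sub_apply, map_sub]
            ring
          rw [this]
          exact hm
        obtain ⟨l, hlmem, hlpos⟩ := exists_simplex_nonneg A hAsym
        set xb : E := ∑ i, l i • Y i with hxb
        have hxbK : xb ∈ K :=
          hconv.sum_mem (fun i _ => hlmem.1 i) hlmem.2 (fun i _ => hYK i)
        refine ⟨xb, hxbK, ?_⟩
        rw [Set.mem_iInter₂]
        intro p hp
        -- p = e i for some i
        obtain ⟨i, hi⟩ := u.equivFin.symm.surjective ⟨p, hp⟩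
        have hkey : ∀ i, 0 ≤ (G i - z) (Y i - xb) := by
          intro i
          have hdiff : Y i - xb = ∑ j, l j • (Y i - Y j) := by
            simp only [smul_sub]
            rw [Finset.sum_sub_distrib, ← Finset.sum_smul, hlmem.2, one_smul, hxb]
          rw [hdiff, map_sum]
          have : ∀ j, (G i - z) (l j • (Y i - Y j)) = A i j * l j := by
            intro j
            rw [map_smul, smul_eq_mul, hA, mul_comm]
          rw [Finset.sum_congr rfl fun j _ => this j]
          exact hlpos i
        have : F p = F (e i : ι) := by rw [hi]
        rw [this]
        exact hkey i
      -- done FIP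
    have hmain := hcomp.inter_iInter_nonempty F hFcl hFIP
    obtain ⟨xb, hxbK, hxbF⟩ := hmain
    rw [Set.mem_iInter] at hxbF
    refine ⟨xb, hxbK, ?_⟩
    intro y hy y' hy'
    exact hxbF ⟨(y, y'), hy, hy'⟩
  · -- Minty solvable ⇒ monotone
    intro hsolv x y x' y' hx hy
    set z : E →L[ℝ] ℝ := (2⁻¹ : ℝ) • (x' + y') with hz
    obtain ⟨xb, hxbK, hxbsol⟩ := hsolv z (segment ℝ x y) ⟨x, left_mem_segment ℝ x y⟩
      (isCompact_segment_aux x y) (convex_segment x y)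
    have h1 := hxbsol x (left_mem_segment ℝ x y) x' hx
    have h2 := hxbsol y (right_mem_segment ℝ x y) y' hy
    have e1 : (x' - z) (x - xb) = (2⁻¹ : ℝ) * ((x' - y') (x - xb)) := by
      simp only [hz, ContinuousLinearMap.sub_apply, ContinuousLinearMap.smul_apply,
        ContinuousLinearMap.add_apply, smul_eq_mul]
      ring
    have e2 : (y' - z) (y - xb) = (2⁻¹ : ℝ) * ((y' - x') (y - xb)) := by
      simp only [hz, ContinuousLinearMap.sub_apply, ContinuousLinearMap.smul_apply,
        ContinuousLinearMap.add_apply, smul_eq_mul]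
      ring
    have e3 : (y' - x') (y - x) = (y' - x') (y - xb) + (x' - y') (x - xb) := by
      simp only [ContinuousLinearMap.sub_apply, map_sub]
      ring
    rw [e1] at h1
    rw [e2] at h2
    rw [e3]
    nlinarith
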